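/- For n ≥ k, the finite k-bonacci word satisfies W_n^(k) = W_{n-1}^(k) W_{n-2}^(k) ... W_{n-k+1}^(k) (k ⊕ W_{n-k}^(k)), where k ⊕ U denotes the word obtained from U by adding k to each digit. -/
import Mathlib


def kbon (k : ℕ) (n : ℕ) : ℕ :=
  if _h1 : n < k - 1 then 0
  else if _h2 : n = k - 1 then 1
  else ∑ i ∈ Finset.range k, kbon k (n - i - 1)
termination_by n
decreasing_by omega

/-- The k-bonacci morphism on words over ℕ. -/
def phiW (k : ℕ) (w : List ℕ) : List ℕ :=
  w.flatMap (fun a => if a % k = k - 1 then [a + 1] else [k * (a / k), a + 1])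

/-- The finite k-bonacci word over the infinite alphabet ℕ. -/
def W (k n : ℕ) : List ℕ := (phiW k)^[n] [0]

lemma phiW_append (k : ℕ) (u v : List ℕ) : phiW k (u ++ v) = phiW k u ++ phiW k v := by
  simp [phiW]

lemma phiW_flatten (k : ℕ) (L : List (List ℕ)) :
    phiW k L.flatten = (L.map (phiW k)).flatten := by
  induction L with
  | nil => simp [phiW]
  | cons a t ih => simp [phiW_append, ih]

lemma phiW_singleton (k a : ℕ) :
    phiW k [a] = if a % k = k - 1 then [a + 1] else [k * (a / k), a + 1] := by
  simp [phiW]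

lemma phiW_cons (k a : ℕ) (l : List ℕ) :
    phiW k (a :: l) = (if a % k = k - 1 then [a + 1] else [k * (a / k), a + 1]) ++ phiW k l := by
  simp [phiW]

lemma phiW_map_add (k : ℕ) (hk : 0 < k) (w : List ℕ) :
    phiW k (w.map (· + k)) = (phiW k w).map (· + k) := by
  induction w with
  | nil => simp [phiW]
  | cons a t ih =>
    have h1 : (a + k) % k = a % k := Nat.add_mod_right a k
    have h2 : (a + k) / k = a / k + 1 := Nat.add_div_right a hk
    by_cases h : a % k = k - 1 <;>
      simp [phiW_cons, h1, h2, h, ih, Nat.add_right_comm, Nat.mul_succ]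

lemma W_succ (k n : ℕ) : W k (n + 1) = phiW k (W k n) := by
  simp [W, Function.iterate_succ_apply']

lemma W_aux (k : ℕ) (hk : 2 < k) :
    ∀ m, m < k → W k m = ((List.range m).map (fun i => W k (m - 1 - i))).flatten ++ [m] := by
  intro m
  induction m with
  | zero => intro _; simp [W]
  | succ m ih =>
    intro hm
    have h1 : m < k := by omega
    rw [W_succ, ih h1, phiW_append, phiW_flatten, List.map_map, phiW_singleton]
    have hmod : ¬ (m % k = k - 1) := by
      rw [Nat.mod_eq_of_lt h1]; omega
    have hdiv : m / k = 0 := Nat.div_eq_of_lt h1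
    rw [if_neg hmod, hdiv]
    have hmap : (List.range m).map ((phiW k) ∘ (fun i => W k (m - 1 - i)))
        = (List.range m).map (fun i => W k (m + 1 - 1 - i)) := by
      apply List.map_congr_left
      intro i hi
      rw [List.mem_range] at hi
      simp only [Function.comp_apply]
      rw [show m + 1 - 1 - i = (m - 1 - i) + 1 from by omega, W_succ]
    rw [hmap, List.range_succ]
    have : m + 1 - 1 - m = 0 := by omega
    simp [this, W, List.flatten_append]

theorem W_recurrence (k n : ℕ) (hk : 2 < k) (hn : k ≤ n) :
    W k n = (((List.range (k - 1)).map (fun i => W k (n - 1 - i))).flatten)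
      ++ (W k (n - k)).map (· + k) := by
  induction n, hn using Nat.le_induction with
  | base =>
    obtain ⟨m, rfl⟩ : ∃ m, k = m + 1 := ⟨k - 1, by omega⟩
    have hm : m < m + 1 := by omega
    rw [show m + 1 = m + 1 from rfl]
    have : W (m+1) (m+1) = phiW (m+1) (W (m+1) m) := W_succ (m+1) m
    rw [this, W_aux (m+1) hk m hm, phiW_append, phiW_flatten, List.map_map,
      phiW_singleton]
    have hmod : m % (m+1) = (m+1) - 1 := by
      rw [Nat.mod_eq_of_lt (by omega)]; omega
    rw [if_pos hmod]
    have hmap : (List.range m).map ((phiW (m+1)) ∘ (fun i => W (m+1) (m - 1 - i)))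
        = (List.range m).map (fun i => W (m+1) (m + 1 - 1 - i)) := by
      apply List.map_congr_left
      intro i hi
      rw [List.mem_range] at hi
      simp only [Function.comp_apply]
      rw [show m + 1 - 1 - i = (m - 1 - i) + 1 from by omega, W_succ]
    rw [hmap]
    have h2 : m + 1 - 1 = m := by omega
    have h3 : m + 1 - (m + 1) = 0 := by omega
    rw [h2, h3]
    simp [W]
  | succ n hn ih =>
    rw [W_succ, ih, phiW_append, phiW_flatten, List.map_map,
      phiW_map_add k (by omega)]
    have hmap : (List.range (k-1)).map ((phiW k) ∘ (fun i => W k (n - 1 - i)))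
        = (List.range (k-1)).map (fun i => W k (n + 1 - 1 - i)) := by
      apply List.map_congr_left
      intro i hi
      rw [List.mem_range] at hi
      simp only [Function.comp_apply]
      rw [show n + 1 - 1 - i = (n - 1 - i) + 1 from by omega, W_succ]
    rw [hmap]
    have : n + 1 - k = (n - k) + 1 := by omega
    rw [this, W_succ]
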